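/- A K×K integer matrix S (with K > 1) is a signed permutation matrix if and only if det(S) = 1 and the matrix |S| obtained by taking absolute values of the entries of S is a permutation matrix. -/

import Mathlib

/-- The matrix of a transposition of `i` and `j`, with the offdiagonal `1` at
position `(j,i)` replaced by `-1`. -/
def signedTranspoMatrix {K : ℕ} (i j : Fin K) : Matrix (Fin K) (Fin K) ℤ :=
  Matrix.of fun k l =>
    if k = i ∧ l = j then 1
    else if k = j ∧ l = i then -1
    else if k = l ∧ k ≠ i ∧ k ≠ j then 1
    else 0

/-- A signed transposition matrix: the matrix of a transposition with one of
the two offdiagonal `1`'s replaced by `-1`. -/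
def IsSignedTransposition {K : ℕ} (S : Matrix (Fin K) (Fin K) ℤ) : Prop :=
  ∃ i j : Fin K, i ≠ j ∧ (S = signedTranspoMatrix i j ∨ S = signedTranspoMatrix j i)

/-- A signed permutation matrix: a (nonempty) product of signed transposition
matrices. -/
def IsSignedPermutation {K : ℕ} (S : Matrix (Fin K) (Fin K) ℤ) : Prop :=
  ∃ L : List (Matrix (Fin K) (Fin K) ℤ),
    L ≠ [] ∧ (∀ T ∈ L, IsSignedTransposition T) ∧ L.prod = S

def spMat {K : ℕ} (σ : Equiv.Perm (Fin K)) (ε : Fin K → ℤ) : Matrix (Fin K) (Fin K) ℤ :=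
  Matrix.of fun k l => if σ k = l then ε k else 0

lemma spMat_congr {K : ℕ} {σ τ : Equiv.Perm (Fin K)} {ε δ : Fin K → ℤ}
    (h1 : σ = τ) (h2 : ∀ k, ε k = δ k) : spMat σ ε = spMat τ δ := by
  subst h1; rw [funext h2]

lemma spMat_mul {K : ℕ} (σ τ : Equiv.Perm (Fin K)) (ε δ : Fin K → ℤ) :
    spMat σ ε * spMat τ δ = spMat (σ.trans τ) (fun k => ε k * δ (σ k)) := by
  ext k l
  simp only [spMat, Matrix.mul_apply, Matrix.of_apply, ite_mul, zero_mul, Equiv.trans_apply]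
  rw [Finset.sum_ite_eq (Finset.univ) (σ k) (fun m => ε k * (if τ m = l then δ m else 0))]
  simp [mul_ite]
  congr

lemma signedTranspo_eq_spMat {K : ℕ} (i j : Fin K) (h : i ≠ j) :
    signedTranspoMatrix i j = spMat (Equiv.swap i j) (fun k => if k = j then -1 else 1) := by
  ext k l
  by_cases hki : k = i <;> by_cases hkj : k = j
  · subst hki; exact absurd hkj h
  · subst hki
    simp [signedTranspoMatrix, spMat, Equiv.swap_apply_left, h, Ne.symm h, eq_comm, hkj]
  · subst hkj
    simp [signedTranspoMatrix, spMat, Equiv.swap_apply_right, h, Ne.symm h, eq_comm]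
  · simp [signedTranspoMatrix, spMat, Equiv.swap_apply_of_ne_of_ne hki hkj, hki, hkj]

lemma TT_eq {K : ℕ} {i j : Fin K} (h : i ≠ j) :
    signedTranspoMatrix i j * signedTranspoMatrix i j
      = spMat 1 (fun k => if k = i ∨ k = j then -1 else 1) := by
  rw [signedTranspo_eq_spMat _ _ h, spMat_mul]
  apply spMat_congr
  · ext x; simp
  · intro k
    rcases eq_or_ne k i with hki | hki <;> rcases eq_or_ne k j with hkj | hkj <;>
      simp_all [Equiv.swap_apply_def, h, Ne.symm h]

lemma spMat_det {K : ℕ} (σ : Equiv.Perm (Fin K)) (ε : Fin K → ℤ) :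
    (spMat σ ε).det = (∏ k, ε k) * (Equiv.Perm.sign σ : ℤ) := by
  have : spMat σ ε = Matrix.diagonal ε * σ.permMatrix ℤ := by
    ext k l
    simp [spMat, Matrix.mul_apply, Matrix.diagonal, Equiv.Perm.permMatrix, PEquiv.toMatrix,
      Equiv.toPEquiv, Matrix.mul_apply]
    rw [Finset.sum_eq_single k]
    · simp
    · intro b _ hb; simp [Ne.symm hb]
    · simp
  rw [this, Matrix.det_mul, Matrix.det_diagonal, Matrix.det_permutation]
  simp

lemma spMat_one {K : ℕ} : spMat (1 : Equiv.Perm (Fin K)) (fun _ => 1) = 1 := by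
  ext k l
  simp [spMat, Matrix.one_apply]
  congr

lemma prod_signs {K : ℕ} (ε : Fin K → ℤ) (hε : ∀ k, ε k = 1 ∨ ε k = -1) :
    (∏ k, ε k) = (-1) ^ (Finset.univ.filter (fun k => ε k = -1)).card := by
  rw [← Finset.prod_filter_mul_prod_filter_not Finset.univ (fun k => ε k = -1)]
  rw [Finset.prod_congr rfl (fun k hk => (Finset.mem_filter.mp hk).2),
    Finset.prod_const]
  have : ∏ k ∈ Finset.univ.filter (fun k => ¬ ε k = -1), ε k = 1 := by
    apply Finset.prod_eq_one
    intro k hk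
    rcases hε k with h | h
    · exact h
    · exact absurd h (Finset.mem_filter.mp hk).2
  rw [this, mul_one]

lemma diag_gen {K : ℕ} (hK : 1 < K) : ∀ n : ℕ, ∀ ε : Fin K → ℤ,
    (∀ k, ε k = 1 ∨ ε k = -1) →
    (Finset.univ.filter (fun k => ε k = -1)).card = n → Even n →
    ∃ L : List (Matrix (Fin K) (Fin K) ℤ),
      L ≠ [] ∧ (∀ T ∈ L, IsSignedTransposition T) ∧ L.prod = spMat 1 ε := by
  intro n
  induction n using Nat.strong_induction_on with
  | _ n ih =>
    intro ε hε hcard heven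
    have h01 : (⟨0, by omega⟩ : Fin K) ≠ ⟨1, by omega⟩ := by simp [Fin.ext_iff]
    rcases Nat.eq_zero_or_pos n with hn | hn
    · subst hn
      have hε1 : ∀ k, ε k = 1 := by
        intro k
        rcases hε k with h | h
        · exact h
        · exfalso
          have hk : k ∈ Finset.univ.filter (fun k => ε k = -1) := by simp [h]
          rw [Finset.card_eq_zero.mp hcard] at hk
          simp at hk
      set T := signedTranspoMatrix (⟨0, by omega⟩ : Fin K) ⟨1, by omega⟩ with hT
      refine ⟨[T, T, T, T], by simp, ?_, ?_⟩
      · intro U hU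
        simp only [List.mem_cons, List.not_mem_nil, or_false] at hU
        rcases hU with h | h | h | h <;> exact h ▸ ⟨_, _, h01, Or.inl hT⟩
      · have hprod : [T, T, T, T].prod = (T * T) * (T * T) := by
          simp [List.prod_cons, mul_assoc]
        rw [hprod, hT, TT_eq h01, spMat_mul]
        rw [show spMat 1 ε = spMat 1 (fun _ => 1) from spMat_congr rfl hε1]
        apply spMat_congr rfl
        intro k
        by_cases h : k = (⟨0, by omega⟩ : Fin K) ∨ k = ⟨1, by omega⟩ <;> simp [h]
    · have h2 : 2 ≤ n := by
        rcases heven with ⟨m, hm⟩; omega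
      set F := Finset.univ.filter (fun k => ε k = -1) with hF
      obtain ⟨i, hi⟩ : F.Nonempty := Finset.card_pos.mp (by omega)
      obtain ⟨j, hj⟩ : (F.erase i).Nonempty := Finset.card_pos.mp (by
        rw [Finset.card_erase_of_mem hi]; omega)
      have hij : i ≠ j := (Finset.ne_of_mem_erase hj).symm
      have hεi : ε i = -1 := (Finset.mem_filter.mp hi).2
      have hεj : ε j = -1 := (Finset.mem_filter.mp (Finset.mem_of_mem_erase hj)).2
      set ε' : Fin K → ℤ := fun k => if k = i ∨ k = j then 1 else ε k with hε'
      have hε's : ∀ k, ε' k = 1 ∨ ε' k = -1 := by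
        intro k
        by_cases h : k = i ∨ k = j
        · left; simp [hε', h]
        · simpa [hε', h] using hε k
      have hcard' : (Finset.univ.filter (fun k => ε' k = -1)).card = n - 2 := by
        have hset : Finset.univ.filter (fun k => ε' k = -1) = (F.erase i).erase j := by
          ext k
          simp only [Finset.mem_filter, Finset.mem_univ, true_and, Finset.mem_erase, hF, hε']
          constructor
          · intro hk
            split_ifs at hk with h
            push_neg at h
            exact ⟨h.2, h.1, hk⟩
          · rintro ⟨hkj, hki, hk⟩
            simp [hki, hkj, hk]
        rw [hset, Finset.card_erase_of_mem hj, Finset.card_erase_of_mem hi, hcard]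
        omega
      have heven' : Even (n - 2) := by
        rcases heven with ⟨m, hm⟩; exact ⟨m - 1, by omega⟩
      obtain ⟨L', hL'ne, hL'mem, hL'prod⟩ := ih (n - 2) (by omega) ε' hε's hcard' heven'
      set T := signedTranspoMatrix i j with hT
      refine ⟨L' ++ [T, T], by simp [hL'ne], ?_, ?_⟩
      · intro U hU
        rw [List.mem_append] at hU
        rcases hU with h | h
        · exact hL'mem U h
        · simp only [List.mem_cons, List.not_mem_nil, or_false] at h
          rcases h with h | h <;> exact h ▸ ⟨_, _, hij, Or.inl hT⟩
      · rw [List.prod_append, hL'prod]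
        have : [T, T].prod = T * T := by simp [List.prod_cons]
        rw [this, hT, TT_eq hij, spMat_mul]
        apply spMat_congr
        · ext x; simp
        · intro k
          rcases eq_or_ne k i with h | h <;> rcases eq_or_ne k j with h' | h'
          · exact absurd (h.symm.trans h') hij
          · subst h; simp [hε', hεi]
          · subst h'; simp [hε', hεj]
          · simp [hε', h, h']

lemma main_gen {K : ℕ} (hK : 1 < K) (σ : Equiv.Perm (Fin K)) :
    ∀ ε : Fin K → ℤ, (∀ k, ε k = 1 ∨ ε k = -1) →
    (∏ k, ε k) * (Equiv.Perm.sign σ : ℤ) = 1 →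
    ∃ L : List (Matrix (Fin K) (Fin K) ℤ),
      L ≠ [] ∧ (∀ T ∈ L, IsSignedTransposition T) ∧ L.prod = spMat σ ε := by
  refine Equiv.Perm.swap_induction_on σ ?_ ?_
  · intro ε hε hdet
    simp only [Equiv.Perm.sign_one, Units.val_one, mul_one] at hdet
    have hcount := prod_signs ε hε
    rw [hdet] at hcount
    have heven : Even (Finset.univ.filter (fun k => ε k = -1)).card := by
      by_contra hodd
      rw [Odd.neg_one_pow (Nat.not_even_iff_odd.mp hodd)] at hcount
      norm_num at hcount
    exact diag_gen hK _ ε hε rfl heven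
  · intro f x y hxy ihf ε hε hdet
    set δ : Fin K → ℤ := fun k => if k = y then -1 else 1 with hδ
    have hδs : ∀ k, δ k = 1 ∨ δ k = -1 := by
      intro k; by_cases h : k = y <;> simp [hδ, h]
    set ε'' : Fin K → ℤ := fun k => ε k * δ (f k) with hε''
    have hε''s : ∀ k, ε'' k = 1 ∨ ε'' k = -1 := by
      intro k
      rcases hε k with h | h <;> rcases hδs (f k) with h' | h' <;>
        simp [hε'', h, h']
    have hprodδ : (∏ k, δ k) = -1 := by
      rw [hδ, Finset.prod_ite_eq' Finset.univ y (fun _ => (-1 : ℤ))]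
      simp
    have hdet'' : (∏ k, ε'' k) * (Equiv.Perm.sign f : ℤ) = 1 := by
      have h1 : (∏ k, ε'' k) = (∏ k, ε k) * ∏ k, δ (f k) := by
        rw [hε'', Finset.prod_mul_distrib]
      have h2 : (∏ k, δ (f k)) = ∏ k, δ k := Equiv.prod_comp f δ
      have h3 : (Equiv.Perm.sign (Equiv.swap x y * f) : ℤ)
          = -(Equiv.Perm.sign f : ℤ) := by
        rw [Equiv.Perm.sign_mul, Equiv.Perm.sign_swap hxy]
        simp
      rw [h1, h2, hprodδ] at *
      rw [h3] at hdet
      linarith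
    obtain ⟨L, hLne, hLmem, hLprod⟩ := ihf ε'' hε''s hdet''
    refine ⟨L ++ [signedTranspoMatrix x y], by simp, ?_, ?_⟩
    · intro U hU
      rw [List.mem_append] at hU
      rcases hU with h | h
      · exact hLmem U h
      · simp only [List.mem_cons, List.not_mem_nil, or_false] at h
        exact h ▸ ⟨x, y, hxy, Or.inl rfl⟩
    · rw [List.prod_append, hLprod]
      simp only [List.prod_cons, List.prod_nil, mul_one]
      rw [signedTranspo_eq_spMat _ _ hxy, spMat_mul]
      apply spMat_congr
      · ext k; simp [Equiv.Perm.mul_apply]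
      · intro k
        show ε'' k * δ (f k) = ε k
        rcases hδs (f k) with h | h <;> simp [hε'', h, mul_assoc]

lemma transpo_det {K : ℕ} {i j : Fin K} (h : i ≠ j) :
    (signedTranspoMatrix i j).det = 1 := by
  rw [signedTranspo_eq_spMat _ _ h, spMat_det]
  rw [Finset.prod_ite_eq' Finset.univ j (fun _ => (-1 : ℤ))]
  rw [Equiv.Perm.sign_swap h]
  simp

lemma prod_SP {K : ℕ} (L : List (Matrix (Fin K) (Fin K) ℤ))
    (hL : ∀ T ∈ L, IsSignedTransposition T) :
    ∃ σ : Equiv.Perm (Fin K), ∃ ε : Fin K → ℤ,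
      (∀ k, ε k = 1 ∨ ε k = -1) ∧ L.prod = spMat σ ε ∧ L.prod.det = 1 := by
  induction L with
  | nil =>
    exact ⟨1, fun _ => 1, fun _ => Or.inl rfl, by simp [spMat_one], by simp⟩
  | cons T L ih =>
    obtain ⟨σ, ε, hε, hprod, hdet⟩ := ih (fun U hU => hL U (List.mem_cons_of_mem T hU))
    obtain ⟨i, j, hij, hT⟩ := hL T List.mem_cons_self
    have hTsp : ∃ a b : Fin K, a ≠ b ∧ T = spMat (Equiv.swap a b)
        (fun k => if k = b then -1 else 1) ∧ T.det = 1 := by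
      rcases hT with h | h
      · exact ⟨i, j, hij, by rw [h, signedTranspo_eq_spMat _ _ hij],
          by rw [h]; exact transpo_det hij⟩
      · exact ⟨j, i, hij.symm, by rw [h, signedTranspo_eq_spMat _ _ hij.symm],
          by rw [h]; exact transpo_det hij.symm⟩
    obtain ⟨a, b, hab, hTeq, hTdet⟩ := hTsp
    refine ⟨(Equiv.swap a b).trans σ, fun k => (if k = b then -1 else 1) * ε (Equiv.swap a b k),
      ?_, ?_, ?_⟩
    · intro k
      have h2 : (if k = b then (-1:ℤ) else 1) = 1 ∨ (if k = b then (-1:ℤ) else 1) = -1 := by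
        by_cases h' : k = b <;> simp [h']
      rcases hε (Equiv.swap a b k) with h | h <;> rcases h2 with h2 | h2 <;>
        simp only [] <;> rw [h, h2] <;> norm_num
    · rw [List.prod_cons, hprod, hTeq, spMat_mul]
    · rw [List.prod_cons, Matrix.det_mul, hTdet, hdet, mul_one]


/-- For `K > 1`, a `K×K` integer matrix `S` is a signed permutation matrix iff
`det S = 1` and the entrywise absolute value `|S|` is a permutation matrix. -/
theorem stmt_5 (K : ℕ) (hK : 1 < K) (S : Matrix (Fin K) (Fin K) ℤ) :
    IsSignedPermutation S ↔
      S.det = 1 ∧ ∃ σ : Equiv.Perm (Fin K),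
        ∀ k l : Fin K, |S k l| = if σ k = l then 1 else 0 := by
  constructor
  · rintro ⟨L, hLne, hLmem, hLprod⟩
    obtain ⟨σ, ε, hε, hprod, hdet⟩ := prod_SP L hLmem
    rw [hLprod] at hprod hdet
    refine ⟨hdet, σ, ?_⟩
    intro k l
    rw [hprod]
    show |if σ k = l then ε k else 0| = _
    split_ifs with h
    · rcases hε k with h' | h' <;> simp [h']
    · simp
  · rintro ⟨hdet, σ, habs⟩
    set ε : Fin K → ℤ := fun k => S k (σ k) with hε
    have hεs : ∀ k, ε k = 1 ∨ ε k = -1 := by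
      intro k
      have := habs k (σ k)
      simp only [if_pos rfl] at this
      rcases abs_eq (by norm_num : (0:ℤ) ≤ 1) |>.mp this with h | h
      · exact Or.inl h
      · exact Or.inr h
    have hS : S = spMat σ ε := by
      ext k l
      show S k l = if σ k = l then ε k else 0
      split_ifs with h
      · rw [hε]; exact congrArg (S k) h.symm ▸ rfl
      · have := habs k l
        rw [if_neg h] at this
        exact abs_eq_zero.mp this
    have hdet' : (∏ k, ε k) * (Equiv.Perm.sign σ : ℤ) = 1 := by
      rw [← spMat_det, ← hS, hdet]
    obtain ⟨L, hLne, hLmem, hLprod⟩ := main_gen hK σ ε hεs hdet'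
    exact ⟨L, hLne, hLmem, hLprod.trans hS.symm⟩
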